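/- arXiv:1906.09338 — 2 statements merged into one kernel-verified Lean document; each statement's English description precedes it below -/
import Mathlib

section
/- The Gaussian mechanism with sensitivity 1 and variance σ², which outputs f(D) + N(0, σ²) for a function f with |f(D) − f(D')| ≤ 1 on neighboring datasets, satisfies (λ, λ/(2σ²))-RDP for all λ > 1. -/
open MeasureTheory Real ProbabilityTheory

/-- Rényi divergence of order `l` between measures `P` and `Q`. -/
noncomputable def renyiDiv {Ω : Type*} [MeasurableSpace Ω] (l : ℝ) (P Q : Measure Ω) : ℝ :=
  (l - 1)⁻¹ * Real.log (∫ x, ((P.rnDeriv Q x).toReal) ^ l ∂Q)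

/-- `(l, ε)`-Rényi differential privacy. -/
def RDP {Dset Ω : Type*} [MeasurableSpace Ω] (Neighbor : Dset → Dset → Prop)
    (M : Dset → Measure Ω) (l ε : ℝ) : Prop :=
  ∀ D D', Neighbor D D' → renyiDiv l (M D) (M D') ≤ ε

open scoped ENNReal NNReal in
lemma pointwise_key (a b l : ℝ) (v : NNReal) (hv : 0 < (v:ℝ)) :
    ∀ x, gaussianPDFReal b v x * (gaussianPDFReal a v x / gaussianPDFReal b v x) ^ l
    = Real.exp (l * (l - 1) * (a - b) ^ 2 / (2 * (v:ℝ))) *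
      gaussianPDFReal (b + l * (a - b)) v x := by
  intro x
  simp only [gaussianPDFReal]
  have hs : (0:ℝ) < (√(2 * π * (v:ℝ)))⁻¹ := by positivity
  rw [mul_div_mul_left _ _ (ne_of_gt hs), ← Real.exp_sub, ← Real.exp_mul, mul_comm,
    mul_left_comm, mul_left_comm (Real.exp (l * (l - 1) * (a - b) ^ 2 / (2 * (v:ℝ)))),
    ← Real.exp_add, ← Real.exp_add]
  congr 2
  have h2 : (2 : ℝ) * (v:ℝ) ≠ 0 := by positivity
  field_simp
  ring

open scoped ENNReal NNReal in
lemma renyi_gauss_eq (a b l : ℝ) (v : NNReal) (hv : 0 < (v:ℝ)) (hl : 1 < l) :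
    renyiDiv l (gaussianReal a v) (gaussianReal b v) = l * (a - b) ^ 2 / (2 * (v:ℝ)) := by
  have hv0 : v ≠ 0 := by
    intro h; rw [h] at hv; simp at hv
  set pa := gaussianPDFReal a v with hpa
  set pb := gaussianPDFReal b v with hpb
  have hpbpos : ∀ x, 0 < pb x := fun x => gaussianPDFReal_pos b v x hv0
  have hpapos : ∀ x, 0 < pa x := fun x => gaussianPDFReal_pos a v x hv0
  set g : ℝ → ℝ≥0∞ := fun x => ENNReal.ofReal (pa x / pb x) with hg
  have hgm : Measurable g :=
    ((measurable_gaussianPDFReal a v).div (measurable_gaussianPDFReal b v)).ennreal_ofReal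
  have hwd : (gaussianReal b v).withDensity g = gaussianReal a v := by
    rw [gaussianReal_of_var_ne_zero b hv0, gaussianReal_of_var_ne_zero a hv0,
      ← withDensity_mul _ (measurable_gaussianPDF b v) hgm]
    congr 1
    funext x
    simp only [Pi.mul_apply, gaussianPDF_def, hg]
    rw [← ENNReal.ofReal_mul (gaussianPDFReal_nonneg b v x)]
    rw [show pb x * (pa x / pb x) = pa x from mul_div_cancel₀ _ (hpbpos x).ne']
  have hrn : (gaussianReal a v).rnDeriv (gaussianReal b v) =ᵐ[gaussianReal b v] g := by
    rw [← hwd]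
    exact Measure.rnDeriv_withDensity _ hgm
  have hint : ∫ x, (((gaussianReal a v).rnDeriv (gaussianReal b v) x).toReal) ^ l
      ∂(gaussianReal b v)
      = Real.exp (l * (l - 1) * (a - b) ^ 2 / (2 * (v:ℝ))) := by
    rw [integral_congr_ae (hrn.mono fun x hx => by rw [hx])]
    rw [gaussianReal_of_var_ne_zero b hv0]
    have : (gaussianPDF b v) = fun x => ((pb x).toNNReal : ℝ≥0∞) := rfl
    rw [this, integral_withDensity_eq_integral_smul (measurable_gaussianPDFReal b v).real_toNNReal]
    have : ∀ x, (pb x).toNNReal • (((g x).toReal) ^ l)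
        = Real.exp (l * (l - 1) * (a - b) ^ 2 / (2 * (v:ℝ)))
          * gaussianPDFReal (b + l * (a - b)) v x := by
      intro x
      rw [NNReal.smul_def, smul_eq_mul, Real.coe_toNNReal _ (hpbpos x).le, hg,
        ENNReal.toReal_ofReal (div_nonneg (hpapos x).le (hpbpos x).le)]
      exact pointwise_key a b l v hv x
    simp_rw [← hpb, this]
    rw [integral_const_mul, integral_gaussianPDFReal_eq_one _ hv0, mul_one]
  rw [renyiDiv, hint, Real.log_exp]
  have hl1 : l - 1 ≠ 0 := by linarith
  field_simp

/-- The Gaussian mechanism `D ↦ f D + N(0, σ²)` with sensitivity 1 satisfies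
`(l, l/(2σ²))`-RDP for all `l > 1`. -/
theorem gaussian_mechanism_rdp {Dset : Type*} (Neighbor : Dset → Dset → Prop)
    (f : Dset → ℝ) (σ : ℝ) (hσ : 0 < σ)
    (hsens : ∀ D D', Neighbor D D' → |f D - f D'| ≤ 1)
    (l : ℝ) (hl : 1 < l) :
    RDP Neighbor (fun D => gaussianReal (f D) ⟨σ ^ 2, sq_nonneg σ⟩) l (l / (2 * σ ^ 2)) := by
  intro D D' hN
  have hv : 0 < ((⟨σ ^ 2, sq_nonneg σ⟩ : NNReal) : ℝ) := by positivity
  simp only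
  rw [renyi_gauss_eq (f D) (f D') l ⟨σ ^ 2, sq_nonneg σ⟩ hv hl]
  have hΔ : (f D - f D') ^ 2 ≤ 1 := by
    rw [← sq_abs]
    exact pow_le_one₀ (abs_nonneg _) (hsens D D' hN)
  show l * (f D - f D') ^ 2 / (2 * σ ^ 2) ≤ l / (2 * σ ^ 2)
  have hl0 : 0 < l := by linarith
  calc l * (f D - f D') ^ 2 / (2 * σ ^ 2) ≤ l * 1 / (2 * σ ^ 2) := by gcongr
    _ = l / (2 * σ ^ 2) := by rw [mul_one]
end

section
/- For k adaptive invocations of a Gaussian mechanism with sensitivity 1 and variance σ², the resulting mechanism satisfies (ε, δ)-DP with ε = k/(2σ²) + √(2k·log(1/δ))/σ for any δ ∈ (0,1), obtained by optimizing the RDP order λ. -/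
open MeasureTheory Real ProbabilityTheory

set_option maxHeartbeats 1000000
noncomputable def gpdf (σ : ℝ) (μ x : ℝ) : ℝ :=
  gaussianPDFReal μ ⟨σ ^ 2, sq_nonneg σ⟩ x

lemma gpdf_pos {σ : ℝ} (hσ : 0 < σ) (μ x : ℝ) : 0 < gpdf σ μ x :=
  gaussianPDFReal_pos μ _ x (by
    intro hcon
    have : σ ^ 2 = 0 := congrArg NNReal.toReal hcon
    exact (pow_pos hσ 2).ne' this)

lemma gpdf_nonneg (σ μ x : ℝ) : 0 ≤ gpdf σ μ x := gaussianPDFReal_nonneg μ _ x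

lemma Measurable.gpdf_comp {α : Type*} [MeasurableSpace α] {φ ψ : α → ℝ}
    (hφ : Measurable φ) (hψ : Measurable ψ) (σ : ℝ) :
    Measurable fun a => gpdf σ (φ a) (ψ a) := by
  unfold gpdf gaussianPDFReal
  fun_prop

noncomputable def dens (σ : ℝ) (g : (i : ℕ) → (Fin i → ℝ) → ℝ) : (k : ℕ) → (Fin k → ℝ) → ℝ
  | 0, _ => 1
  | (k + 1), h => dens σ g k (Fin.init h) * gpdf σ (g k (Fin.init h)) (h (Fin.last k))

noncomputable def wdens (σ t : ℝ) (g g' : (i : ℕ) → (Fin i → ℝ) → ℝ) :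
    (k : ℕ) → (Fin k → ℝ) → ℝ
  | 0, _ => 1
  | (k + 1), h => wdens σ t g g' k (Fin.init h) *
      (gpdf σ (g k (Fin.init h)) (h (Fin.last k)) ^ (1 + t) *
        gpdf σ (g' k (Fin.init h)) (h (Fin.last k)) ^ (-t))

lemma dens_succ (σ : ℝ) (g : (i : ℕ) → (Fin i → ℝ) → ℝ) (k : ℕ) (h : Fin (k+1) → ℝ) :
    dens σ g (k + 1) h = dens σ g k (Fin.init h) * gpdf σ (g k (Fin.init h)) (h (Fin.last k)) := by
  rw [dens]

lemma wdens_succ (σ t : ℝ) (g g' : (i : ℕ) → (Fin i → ℝ) → ℝ) (k : ℕ) (h : Fin (k+1) → ℝ) :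
    wdens σ t g g' (k + 1) h = wdens σ t g g' k (Fin.init h) *
      (gpdf σ (g k (Fin.init h)) (h (Fin.last k)) ^ (1 + t) *
        gpdf σ (g' k (Fin.init h)) (h (Fin.last k)) ^ (-t)) := by
  rw [wdens]

lemma dens_pos {σ : ℝ} (hσ : 0 < σ) (g : (i : ℕ) → (Fin i → ℝ) → ℝ) :
    ∀ k h, 0 < dens σ g k h
  | 0, _ => one_pos
  | (k + 1), h => mul_pos (dens_pos hσ g k _) (gpdf_pos hσ _ _)

lemma measurable_init {k : ℕ} : Measurable (Fin.init : (Fin (k+1) → ℝ) → (Fin k → ℝ)) :=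
  measurable_pi_lambda _ fun i => measurable_pi_apply _

lemma measurable_dens (σ : ℝ) (g : (i : ℕ) → (Fin i → ℝ) → ℝ) (hg : ∀ i, Measurable (g i)) :
    ∀ k, Measurable (dens σ g k) := by
  intro k
  induction k with
  | zero => exact measurable_const
  | succ k ih =>
      simp only [funext fun h => dens_succ σ g k h]
      exact (ih.comp measurable_init).mul
        (Measurable.gpdf_comp ((hg k).comp measurable_init) (measurable_pi_apply _) σ)

lemma measurable_wdens (σ t : ℝ) (g g' : (i : ℕ) → (Fin i → ℝ) → ℝ)
    (hg : ∀ i, Measurable (g i)) (hg' : ∀ i, Measurable (g' i)) :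
    ∀ k, Measurable (wdens σ t g g' k) := by
  intro k
  induction k with
  | zero => exact measurable_const
  | succ k ih =>
      simp only [funext fun h => wdens_succ σ t g g' k h]
      refine (ih.comp measurable_init).mul (Measurable.mul ?_ ?_)
      · exact (Measurable.gpdf_comp ((hg k).comp measurable_init)
          (measurable_pi_apply _) σ).pow measurable_const
      · exact (Measurable.gpdf_comp ((hg' k).comp measurable_init)
          (measurable_pi_apply _) σ).pow measurable_const

lemma wdens_eq {σ : ℝ} (hσ : 0 < σ) (t : ℝ) (g g' : (i : ℕ) → (Fin i → ℝ) → ℝ) :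
    ∀ k h, wdens σ t g g' k h = dens σ g k h ^ (1 + t) * dens σ g' k h ^ (-t)
  | 0, h => by simp [wdens, dens]
  | (k + 1), h => by
      rw [wdens, dens, dens, wdens_eq hσ t g g' k,
        Real.mul_rpow (dens_pos hσ g k _).le (gpdf_nonneg _ _ _),
        Real.mul_rpow (dens_pos hσ g' k _).le (gpdf_nonneg _ _ _)]
      ring

lemma gpdf_def {σ : ℝ} (μ x : ℝ) :
    gpdf σ μ x = (Real.sqrt (2 * π * σ ^ 2))⁻¹ * Real.exp (-(x - μ) ^ 2 / (2 * σ ^ 2)) := rfl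

lemma gpdf_rpow_identity {σ : ℝ} (hσ : 0 < σ) (t μ μ' x : ℝ) :
    gpdf σ μ x ^ (1 + t) * gpdf σ μ' x ^ (-t) =
      Real.exp (t * (1 + t) * (μ - μ') ^ 2 / (2 * σ ^ 2)) * gpdf σ ((1 + t) * μ - t * μ') x := by
  have hC : 0 < (Real.sqrt (2 * π * σ ^ 2))⁻¹ := by
    have : 0 < 2 * π * σ ^ 2 := by positivity
    positivity
  have hσ2 : (2 : ℝ) * σ ^ 2 ≠ 0 := by positivity
  have key : ∀ v r : ℝ, gpdf σ v x ^ r =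
      (Real.sqrt (2 * π * σ ^ 2))⁻¹ ^ r * Real.exp (-(x - v) ^ 2 / (2 * σ ^ 2) * r) := by
    intro v r
    rw [gpdf_def, Real.mul_rpow hC.le (Real.exp_nonneg _),
      Real.rpow_def_of_pos (Real.exp_pos _), Real.log_exp]
  rw [key, key, gpdf_def]
  rw [show (Real.sqrt (2 * π * σ ^ 2))⁻¹ ^ (1 + t) * Real.exp (-(x - μ) ^ 2 / (2 * σ ^ 2) * (1 + t)) *
      ((Real.sqrt (2 * π * σ ^ 2))⁻¹ ^ (-t) * Real.exp (-(x - μ') ^ 2 / (2 * σ ^ 2) * (-t))) =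
      ((Real.sqrt (2 * π * σ ^ 2))⁻¹ ^ (1 + t) * (Real.sqrt (2 * π * σ ^ 2))⁻¹ ^ (-t)) *
      (Real.exp (-(x - μ) ^ 2 / (2 * σ ^ 2) * (1 + t)) * Real.exp (-(x - μ') ^ 2 / (2 * σ ^ 2) * (-t)))
    from by ring]
  rw [← Real.rpow_add hC, show 1 + t + -t = 1 from by ring, Real.rpow_one, ← Real.exp_add]
  rw [show Real.exp (t * (1 + t) * (μ - μ') ^ 2 / (2 * σ ^ 2)) *
      ((Real.sqrt (2 * π * σ ^ 2))⁻¹ * Real.exp (-(x - ((1 + t) * μ - t * μ')) ^ 2 / (2 * σ ^ 2))) =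
      (Real.sqrt (2 * π * σ ^ 2))⁻¹ * (Real.exp (t * (1 + t) * (μ - μ') ^ 2 / (2 * σ ^ 2)) *
        Real.exp (-(x - ((1 + t) * μ - t * μ')) ^ 2 / (2 * σ ^ 2))) from by ring, ← Real.exp_add]
  congr 1
  field_simp
  ring

lemma var_ne_zero {σ : ℝ} (hσ : 0 < σ) : (⟨σ ^ 2, sq_nonneg σ⟩ : NNReal) ≠ 0 := by
  intro hcon
  have : σ ^ 2 = 0 := congrArg NNReal.toReal hcon
  exact (pow_pos hσ 2).ne' this

lemma lintegral_gpdf_rpow {σ : ℝ} (hσ : 0 < σ) {t : ℝ} (ht : 0 ≤ t) {μ μ' : ℝ}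
    (hc : |μ - μ'| ≤ 1) :
    ∫⁻ x, ENNReal.ofReal (gpdf σ μ x ^ (1 + t) * gpdf σ μ' x ^ (-t)) ≤
      ENNReal.ofReal (Real.exp (t * (1 + t) / (2 * σ ^ 2))) := by
  simp only [gpdf_rpow_identity hσ]
  simp only [ENNReal.ofReal_mul (Real.exp_nonneg _)]
  rw [lintegral_const_mul (f := fun x => ENNReal.ofReal (gpdf σ ((1 + t) * μ - t * μ') x)) _
    ((Measurable.gpdf_comp measurable_const measurable_id σ).ennreal_ofReal)]
  rw [show ∫⁻ x, ENNReal.ofReal (gpdf σ ((1 + t) * μ - t * μ') x) = 1 from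
    lintegral_gaussianPDFReal_eq_one _ (var_ne_zero hσ), mul_one]
  apply ENNReal.ofReal_le_ofReal
  apply Real.exp_le_exp.mpr
  have h1 : (μ - μ') ^ 2 ≤ 1 := by
    have := abs_le.mp hc
    nlinarith [this.1, this.2]
  have h2 : t * (1 + t) * (μ - μ') ^ 2 ≤ t * (1 + t) := by
    nlinarith [mul_nonneg ht (by linarith : (0:ℝ) ≤ 1 + t), sq_nonneg (μ - μ')]
  gcongr


lemma lintegral_snoc {k : ℕ} (F : (Fin (k + 1) → ℝ) → ENNReal) (hF : Measurable F) :
    ∫⁻ h, F h = ∫⁻ h : Fin k → ℝ, ∫⁻ x : ℝ, F (Fin.snoc h x) := by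
  have mp := (measurePreserving_piFinSuccAbove (fun _ : Fin (k+1) => (volume : Measure ℝ))
    (Fin.last k)).symm
  rw [volume_pi, ← mp.lintegral_comp hF]
  have h2 := lintegral_prod_symm (μ := (volume : Measure ℝ))
    (ν := Measure.pi fun _ : Fin k => (volume : Measure ℝ))
    (F ∘ (MeasurableEquiv.piFinSuccAbove (fun _ : Fin (k+1) => ℝ) (Fin.last k)).symm)
    (hF.comp mp.measurable).aemeasurable
  simp only [Function.comp_def] at h2
  rw [h2]
  have hs : ∀ (h : Fin k → ℝ) (x : ℝ),
      (MeasurableEquiv.piFinSuccAbove (fun _ : Fin (k+1) => ℝ) (Fin.last k)).symm (x, h)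
        = Fin.snoc h x := by
    intro h x
    simp [MeasurableEquiv.piFinSuccAbove, Fin.insertNthEquiv, Fin.insertNth_last']
  have : (volume : Measure (Fin k → ℝ)) = Measure.pi fun _ => volume := volume_pi
  rw [← this]
  congr 1
  ext h
  congr 1
  ext x
  rw [hs]

lemma wdens_nonneg {σ : ℝ} (hσ : 0 < σ) (t : ℝ) (g g' : (i : ℕ) → (Fin i → ℝ) → ℝ)
    (k : ℕ) (h : Fin k → ℝ) : 0 ≤ wdens σ t g g' k h := by
  rw [wdens_eq hσ]
  exact mul_nonneg (Real.rpow_nonneg (dens_pos hσ g k h).le _)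
    (Real.rpow_nonneg (dens_pos hσ g' k h).le _)

lemma lintegral_wdens_le {σ : ℝ} (hσ : 0 < σ) {t : ℝ} (ht : 0 ≤ t)
    (g g' : (i : ℕ) → (Fin i → ℝ) → ℝ) (hg : ∀ i, Measurable (g i))
    (hg' : ∀ i, Measurable (g' i)) (hsens : ∀ i h, |g i h - g' i h| ≤ 1) :
    ∀ k : ℕ, ∫⁻ h, ENNReal.ofReal (wdens σ t g g' k h) ≤
      ENNReal.ofReal (Real.exp (k * (t * (1 + t)) / (2 * σ ^ 2))) := by
  intro k
  induction k with
  | zero =>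
      simp only [wdens, Nat.cast_zero, zero_mul, zero_div, Real.exp_zero, ENNReal.ofReal_one]
      rw [lintegral_const]
      simp [volume_pi, Measure.pi_univ]
  | succ k ih =>
      have hmw : Measurable fun h => ENNReal.ofReal (wdens σ t g g' (k+1) h) :=
        (measurable_wdens σ t g g' hg hg' (k+1)).ennreal_ofReal
      rw [lintegral_snoc _ hmw]
      have hstep : ∀ h : Fin k → ℝ,
          (∫⁻ x, ENNReal.ofReal (wdens σ t g g' (k+1) (Fin.snoc h x))) ≤
            ENNReal.ofReal (wdens σ t g g' k h) *
              ENNReal.ofReal (Real.exp (t * (1 + t) / (2 * σ ^ 2))) := by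
        intro h
        have heq : ∀ x : ℝ, wdens σ t g g' (k+1) (Fin.snoc h x) =
            wdens σ t g g' k h *
              (gpdf σ (g k h) x ^ (1 + t) * gpdf σ (g' k h) x ^ (-t)) := by
          intro x
          rw [wdens_succ]
          simp [Fin.init_snoc, Fin.snoc_last]
        simp only [heq, ENNReal.ofReal_mul (wdens_nonneg hσ t g g' k h)]
        rw [lintegral_const_mul _ (Measurable.ennreal_ofReal (by
          exact ((Measurable.gpdf_comp measurable_const measurable_id σ).pow
            measurable_const).mul ((Measurable.gpdf_comp measurable_const measurable_id σ).pow
            measurable_const)))]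
        exact mul_le_mul_right (lintegral_gpdf_rpow hσ ht (hsens k h)) _
      calc ∫⁻ h : Fin k → ℝ, ∫⁻ x, ENNReal.ofReal (wdens σ t g g' (k+1) (Fin.snoc h x))
          ≤ ∫⁻ h : Fin k → ℝ, ENNReal.ofReal (wdens σ t g g' k h) *
              ENNReal.ofReal (Real.exp (t * (1 + t) / (2 * σ ^ 2))) :=
            lintegral_mono hstep
        _ = (∫⁻ h : Fin k → ℝ, ENNReal.ofReal (wdens σ t g g' k h)) *
              ENNReal.ofReal (Real.exp (t * (1 + t) / (2 * σ ^ 2))) :=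
            lintegral_mul_const _ ((measurable_wdens σ t g g' hg hg' k).ennreal_ofReal)
        _ ≤ ENNReal.ofReal (Real.exp (k * (t * (1 + t)) / (2 * σ ^ 2))) *
              ENNReal.ofReal (Real.exp (t * (1 + t) / (2 * σ ^ 2))) :=
            mul_le_mul_left ih _
        _ = ENNReal.ofReal (Real.exp ((k+1 : ℕ) * (t * (1 + t)) / (2 * σ ^ 2))) := by
            rw [← ENNReal.ofReal_mul (Real.exp_nonneg _), ← Real.exp_add]
            congr 2
            push_cast
            field_simp

/-- Adaptive composition of mechanisms `M 0, …, M (k-1)`. -/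
noncomputable def composed {Dset Ω : Type*} [MeasurableSpace Ω]
    (M : (i : ℕ) → Dset → (Fin i → Ω) → Measure Ω) (D : Dset) :
    (k : ℕ) → Measure (Fin k → Ω)
  | 0 => Measure.dirac (fun i => i.elim0)
  | (k + 1) => (composed M D k).bind (fun h => (M k D h).map (Fin.snoc h))

lemma composed_zero {Dset Ω : Type*} [MeasurableSpace Ω]
    (M : (i : ℕ) → Dset → (Fin i → Ω) → Measure Ω) (D : Dset) :
    composed M D 0 = Measure.dirac (fun i => i.elim0) := by rw [composed]

lemma composed_succ {Dset Ω : Type*} [MeasurableSpace Ω]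
    (M : (i : ℕ) → Dset → (Fin i → Ω) → Measure Ω) (D : Dset) (k : ℕ) :
    composed M D (k + 1) = (composed M D k).bind (fun h => (M k D h).map (Fin.snoc h)) := by
  rw [composed]

lemma measurable_snoc2 {k : ℕ} :
    Measurable fun p : (Fin k → ℝ) × ℝ => (Fin.snoc p.1 p.2 : Fin (k+1) → ℝ) := by
  refine measurable_pi_lambda _ fun i => ?_
  refine Fin.lastCases ?_ ?_ i
  · simpa [Fin.snoc_last] using measurable_snd
  · intro j
    simp [Fin.snoc_castSucc]
    exact (measurable_pi_apply j).comp measurable_fst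

lemma measurable_snoc1 {k : ℕ} (h : Fin k → ℝ) : Measurable fun x : ℝ => (Fin.snoc h x : Fin (k+1) → ℝ) :=
  measurable_snoc2.comp (measurable_const.prodMk measurable_id)

lemma gaussianReal_map_snoc_apply {σ : ℝ} (hσ : 0 < σ) {k : ℕ} (μ₀ : ℝ) (h : Fin k → ℝ)
    {s : Set (Fin (k+1) → ℝ)} (hs : MeasurableSet s) :
    ((gaussianReal μ₀ ⟨σ ^ 2, sq_nonneg σ⟩).map (Fin.snoc h)) s =
      ∫⁻ x, s.indicator 1 (Fin.snoc h x) * ENNReal.ofReal (gpdf σ μ₀ x) := by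
  rw [Measure.map_apply (measurable_snoc1 h) hs, gaussianReal_apply _ (var_ne_zero hσ),
    ← lintegral_indicator (measurable_snoc1 h hs)]
  congr 1
  ext x
  by_cases hx : Fin.snoc h x ∈ s
  · simp [Set.indicator, hx, gaussianPDF, gpdf]
  · simp [Set.indicator, hx]

lemma measurable_kernel_aux {Dset : Type*} {σ : ℝ} (hσ : 0 < σ) {k : ℕ}
    (f : (i : ℕ) → Dset → (Fin i → ℝ) → ℝ) (hfmeas : ∀ i D, Measurable (f i D)) (D : Dset)
    {s : Set (Fin (k+1) → ℝ)} (hs : MeasurableSet s) :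
    Measurable fun h : Fin k → ℝ =>
      ∫⁻ x, s.indicator 1 (Fin.snoc h x) * ENNReal.ofReal (gpdf σ (f k D h) x) := by
  apply Measurable.lintegral_prod_right'
    (f := fun p : (Fin k → ℝ) × ℝ => s.indicator 1 (Fin.snoc p.1 p.2) *
      ENNReal.ofReal (gpdf σ (f k D p.1) p.2))
  exact ((measurable_one.indicator hs).comp measurable_snoc2).mul
    ((Measurable.gpdf_comp ((hfmeas k D).comp measurable_fst) measurable_snd σ).ennreal_ofReal)

lemma composed_eq {Dset : Type*} {σ : ℝ} (hσ : 0 < σ)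
    (f : (i : ℕ) → Dset → (Fin i → ℝ) → ℝ) (hfmeas : ∀ i D, Measurable (f i D)) (D : Dset) :
    ∀ k : ℕ, composed (fun i D h => gaussianReal (f i D h) ⟨σ ^ 2, sq_nonneg σ⟩) D k =
      (volume : Measure (Fin k → ℝ)).withDensity
        (fun h => ENNReal.ofReal (dens σ (fun i => f i D) k h)) := by
  intro k
  induction k with
  | zero =>
      rw [composed_zero]
      have : (fun h : Fin 0 → ℝ => ENNReal.ofReal (dens σ (fun i => f i D) 0 h)) = 1 := by
        funext h
        simp [dens]
      rw [this, withDensity_one, volume_pi, Measure.pi_of_empty]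
      exact congrArg Measure.dirac (Subsingleton.elim _ _)
  | succ k ih =>
      rw [composed_succ]
      ext s hs
      have hker : Measurable fun h : Fin k → ℝ =>
          ((gaussianReal (f k D h) ⟨σ ^ 2, sq_nonneg σ⟩).map (Fin.snoc h)
            : Measure (Fin (k+1) → ℝ)) := by
        apply Measure.measurable_of_measurable_coe
        intro s' hs'
        simp only [fun h => gaussianReal_map_snoc_apply hσ (f k D h) h hs']
        exact measurable_kernel_aux hσ f hfmeas D hs'
      rw [Measure.bind_apply hs hker.aemeasurable, ih]
      simp only [fun h => gaussianReal_map_snoc_apply hσ (f k D h) h hs]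
      rw [lintegral_withDensity_eq_lintegral_mul _
        ((measurable_dens σ (fun i => f i D) (fun i => hfmeas i D) k).ennreal_ofReal)
        (measurable_kernel_aux hσ f hfmeas D hs)]
      have key : ∀ h : Fin k → ℝ,
          ENNReal.ofReal (dens σ (fun i => f i D) k h) *
            (∫⁻ x, s.indicator 1 (Fin.snoc h x) * ENNReal.ofReal (gpdf σ (f k D h) x)) =
          ∫⁻ x, s.indicator (fun z => ENNReal.ofReal (dens σ (fun i => f i D) (k+1) z))
            (Fin.snoc h x) := by
        intro h
        rw [← lintegral_const_mul _ (by
          exact ((measurable_one.indicator hs).comp (measurable_snoc1 h)).mul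
            ((Measurable.gpdf_comp measurable_const measurable_id σ).ennreal_ofReal))]
        congr 1
        funext x
        by_cases hx : Fin.snoc h x ∈ s
        · simp only [Set.indicator_of_mem hx, Pi.one_apply, one_mul, mul_one]
          rw [dens_succ]
          simp only [Fin.init_snoc, Fin.snoc_last]
          rw [ENNReal.ofReal_mul (dens_pos hσ _ k h).le]
        · simp [Set.indicator_of_notMem hx]
      simp only [Pi.mul_apply]
      simp only [key]
      rw [← lintegral_snoc _ ((measurable_dens σ (fun i => f i D) (fun i => hfmeas i D) (k+1)).ennreal_ofReal.indicator hs)]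
      rw [withDensity_apply _ hs, ← lintegral_indicator hs]


/-- `(ε, δ)`-differential privacy. -/
def DP {Dset Ω : Type*} [MeasurableSpace Ω] (Neighbor : Dset → Dset → Prop)
    (M : Dset → Measure Ω) (ε δ : ℝ) : Prop :=
  ∀ D D', Neighbor D D' → ∀ S : Set Ω, MeasurableSet S →
    ((M D) S).toReal ≤ Real.exp ε * ((M D') S).toReal + δ

/-- `k` adaptive invocations of a sensitivity-1 Gaussian mechanism with variance `σ²`
satisfy `(ε, δ)`-DP with `ε = k/(2σ²) + √(2k·log(1/δ))/σ`, for any `δ ∈ (0,1)`. -/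
theorem adaptive_gaussian_composition_dp {Dset : Type*}
    (Neighbor : Dset → Dset → Prop)
    (f : (i : ℕ) → Dset → (Fin i → ℝ) → ℝ)
    (hf : ∀ i, ∀ h : Fin i → ℝ, ∀ D D', Neighbor D D' → |f i D h - f i D' h| ≤ 1)
    (hfmeas : ∀ i D, Measurable (f i D))
    (k : ℕ) (hk : 0 < k) (σ : ℝ) (hσ : 0 < σ) :
    ∀ δ ∈ Set.Ioo (0 : ℝ) 1,
      DP Neighbor
        (fun D => composed (fun i D h => gaussianReal (f i D h) ⟨σ ^ 2, sq_nonneg σ⟩) D k)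
        (k / (2 * σ ^ 2) + Real.sqrt (2 * k * Real.log (1 / δ)) / σ) δ := by
  intro δ hδ D D' hN S hS
  obtain ⟨hδ0, hδ1⟩ := hδ
  set L : ℝ := Real.log (1 / δ) with hLdef
  have hL : 0 < L := Real.log_pos (by rw [lt_div_iff₀ hδ0]; linarith)
  set ε : ℝ := k / (2 * σ ^ 2) + Real.sqrt (2 * k * L) / σ with hεdef
  set u : ℝ := Real.sqrt (2 * L / k) with hudef
  have hu : 0 ≤ u := Real.sqrt_nonneg _
  set t : ℝ := σ * u with htdef
  have ht : 0 ≤ t := mul_nonneg hσ.le hu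
  have hk0 : (0 : ℝ) < (k : ℝ) := Nat.cast_pos.mpr hk
  have hu2 : u ^ 2 = 2 * L / k := Real.sq_sqrt (by positivity)
  have huw : u * Real.sqrt (2 * k * L) = 2 * L := by
    rw [hudef, ← Real.sqrt_mul (by positivity)]
    rw [show 2 * L / (k:ℝ) * (2 * k * L) = (2 * L) ^ 2 by field_simp]
    exact Real.sqrt_sq (by positivity)
  have hexp : (k : ℝ) * (t * (1 + t)) / (2 * σ ^ 2) - t * ε = Real.log δ := by
    have ht2 : t ^ 2 = σ ^ 2 * (2 * L / k) := by rw [htdef, mul_pow, hu2]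
    have hlog : Real.log δ = -L := by
      rw [hLdef, one_div, Real.log_inv, neg_neg]
    rw [hlog, hεdef]
    have expand : (k : ℝ) * (t * (1 + t)) / (2 * σ ^ 2) =
        (k : ℝ) * t / (2 * σ ^ 2) + (k : ℝ) * t ^ 2 / (2 * σ ^ 2) := by ring
    rw [expand, ht2]
    have e1 : (k : ℝ) * (σ ^ 2 * (2 * L / k)) / (2 * σ ^ 2) = L := by
      field_simp
    have e2 : t * ((k : ℝ) / (2 * σ ^ 2) + Real.sqrt (2 * k * L) / σ) =
        (k : ℝ) * t / (2 * σ ^ 2) + 2 * L := by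
      rw [htdef]
      rw [show σ * u * ((k : ℝ) / (2 * σ ^ 2) + Real.sqrt (2 * k * L) / σ) =
        (k : ℝ) * (σ * u) / (2 * σ ^ 2) + (u * Real.sqrt (2 * k * L)) * (σ / σ) by ring]
      rw [huw, div_self hσ.ne', mul_one]
    rw [e1, e2]
    ring
  set g : (i : ℕ) → (Fin i → ℝ) → ℝ := fun i => f i D with hgdef
  set g' : (i : ℕ) → (Fin i → ℝ) → ℝ := fun i => f i D' with hg'def
  have hmg : ∀ i, Measurable (g i) := fun i => hfmeas i D
  have hmg' : ∀ i, Measurable (g' i) := fun i => hfmeas i D'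
  have hsens : ∀ i h, |g i h - g' i h| ≤ 1 := fun i h => hf i h D D' hN
  have hsens' : ∀ i h, |g' i h - g i h| ≤ 1 := fun i h => by
    rw [abs_sub_comm]; exact hsens i h
  have md : Measurable (dens σ g k) := measurable_dens σ g hmg k
  have md' : Measurable (dens σ g' k) := measurable_dens σ g' hmg' k
  have hcomp : composed (fun i D h => gaussianReal (f i D h) ⟨σ ^ 2, sq_nonneg σ⟩) D k =
      (volume : Measure (Fin k → ℝ)).withDensity (fun h => ENNReal.ofReal (dens σ g k h)) :=
    composed_eq hσ f hfmeas D k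
  have hcomp' : composed (fun i D h => gaussianReal (f i D h) ⟨σ ^ 2, sq_nonneg σ⟩) D' k =
      (volume : Measure (Fin k → ℝ)).withDensity (fun h => ENNReal.ofReal (dens σ g' k h)) :=
    composed_eq hσ f hfmeas D' k
  set A : Set (Fin k → ℝ) := {h | dens σ g' k h * Real.exp ε < dens σ g k h} with hAdef
  have hA : MeasurableSet A := measurableSet_lt (md'.mul_const _) md
  set ν : Measure (Fin k → ℝ) :=
    (volume : Measure (Fin k → ℝ)).withDensity (fun h => ENNReal.ofReal (dens σ g k h)) with hν
  set ν' : Measure (Fin k → ℝ) :=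
    (volume : Measure (Fin k → ℝ)).withDensity (fun h => ENNReal.ofReal (dens σ g' k h)) with hν'
  have hmass' : ν' S ≤ 1 := by
    rw [hν', withDensity_apply _ hS]
    refine le_trans (setLIntegral_le_lintegral _ _) ?_
    have h0 : ∀ h, dens σ g' k h = wdens σ 0 g' g k h := by
      intro h
      rw [wdens_eq hσ, neg_zero, Real.rpow_zero, mul_one, add_zero, Real.rpow_one]
    simp only [h0]
    refine le_trans (lintegral_wdens_le hσ le_rfl g' g hmg' hmg hsens' k) ?_
    simp
  have htail : ν A ≤ ENNReal.ofReal δ := by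
    rw [hν, withDensity_apply _ hA]
    have hpt : ∀ h ∈ A, ENNReal.ofReal (dens σ g k h) ≤
        ENNReal.ofReal (Real.exp (-(t * ε)) * wdens σ t g g' k h) := by
      intro h hh
      apply ENNReal.ofReal_le_ofReal
      have hp : 0 < dens σ g k h := dens_pos hσ g k h
      have hq : 0 < dens σ g' k h := dens_pos hσ g' k h
      have hratio : Real.exp ε < dens σ g k h / dens σ g' k h := by
        rw [lt_div_iff₀ hq]
        rw [hAdef] at hh
        simpa [mul_comm] using hh
      have hrpow : Real.exp (t * ε) ≤ (dens σ g k h / dens σ g' k h) ^ t := by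
        calc Real.exp (t * ε) = (Real.exp ε) ^ t := by
              rw [Real.rpow_def_of_pos (Real.exp_pos ε), Real.log_exp, mul_comm]
          _ ≤ (dens σ g k h / dens σ g' k h) ^ t :=
              Real.rpow_le_rpow (Real.exp_nonneg _) hratio.le ht
      have hwd : wdens σ t g g' k h =
          dens σ g k h * (dens σ g k h / dens σ g' k h) ^ t := by
        rw [wdens_eq hσ, Real.rpow_add hp, Real.rpow_one,
          Real.div_rpow hp.le hq.le, Real.rpow_neg hq.le, div_eq_mul_inv]
        ring
      rw [hwd]
      calc dens σ g k h
          = Real.exp (-(t * ε)) * (dens σ g k h * Real.exp (t * ε)) := by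
            rw [show Real.exp (-(t * ε)) * (dens σ g k h * Real.exp (t * ε)) =
              dens σ g k h * (Real.exp (-(t * ε)) * Real.exp (t * ε)) by ring,
              ← Real.exp_add, neg_add_cancel, Real.exp_zero, mul_one]
        _ ≤ Real.exp (-(t * ε)) * (dens σ g k h * (dens σ g k h / dens σ g' k h) ^ t) := by
            apply mul_le_mul_of_nonneg_left ?_ (Real.exp_nonneg _)
            exact mul_le_mul_of_nonneg_left hrpow hp.le
    calc ∫⁻ h in A, ENNReal.ofReal (dens σ g k h) ∂volume
        ≤ ∫⁻ h in A, ENNReal.ofReal (Real.exp (-(t * ε)) * wdens σ t g g' k h) ∂volume :=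
          setLIntegral_mono (((measurable_wdens σ t g g' hmg hmg' k).const_mul
            _).ennreal_ofReal) hpt
      _ ≤ ∫⁻ h, ENNReal.ofReal (Real.exp (-(t * ε)) * wdens σ t g g' k h) ∂volume :=
          setLIntegral_le_lintegral _ _
      _ = ENNReal.ofReal (Real.exp (-(t * ε))) *
            ∫⁻ h, ENNReal.ofReal (wdens σ t g g' k h) ∂volume := by
          simp only [ENNReal.ofReal_mul (Real.exp_nonneg _)]
          rw [lintegral_const_mul _ ((measurable_wdens σ t g g' hmg hmg' k).ennreal_ofReal)]
      _ ≤ ENNReal.ofReal (Real.exp (-(t * ε))) *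
            ENNReal.ofReal (Real.exp (k * (t * (1 + t)) / (2 * σ ^ 2))) :=
          mul_le_mul_right (lintegral_wdens_le hσ ht g g' hmg hmg' hsens k) _
      _ = ENNReal.ofReal δ := by
          rw [← ENNReal.ofReal_mul (Real.exp_nonneg _), ← Real.exp_add]
          congr 1
          rw [show -(t * ε) + k * (t * (1 + t)) / (2 * σ ^ 2) =
            k * (t * (1 + t)) / (2 * σ ^ 2) - t * ε by ring, hexp]
          exact Real.exp_log hδ0
  have hmain : ν S ≤ ENNReal.ofReal (Real.exp ε) * ν' S + ENNReal.ofReal δ := by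
    have hsplit : ν S = ν (S \ A) + ν (S ∩ A) := by
      rw [← measure_diff_add_inter S hA]
    have h1 : ν (S \ A) ≤ ENNReal.ofReal (Real.exp ε) * ν' S := by
      rw [hν, hν', withDensity_apply _ (hS.diff hA), withDensity_apply _ hS]
      calc ∫⁻ h in S \ A, ENNReal.ofReal (dens σ g k h) ∂volume
          ≤ ∫⁻ h in S \ A, ENNReal.ofReal (Real.exp ε * dens σ g' k h) ∂volume := by
            refine setLIntegral_mono ((md'.const_mul _).ennreal_ofReal) ?_
            intro h hh
            apply ENNReal.ofReal_le_ofReal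
            have : ¬ (dens σ g' k h * Real.exp ε < dens σ g k h) := hh.2
            rw [mul_comm] at this
            exact not_lt.mp this
        _ = ENNReal.ofReal (Real.exp ε) * ∫⁻ h in S \ A, ENNReal.ofReal (dens σ g' k h) ∂volume := by
            simp only [ENNReal.ofReal_mul (Real.exp_nonneg _)]
            rw [lintegral_const_mul _ (md'.ennreal_ofReal)]
        _ ≤ ENNReal.ofReal (Real.exp ε) * ∫⁻ h in S, ENNReal.ofReal (dens σ g' k h) ∂volume :=
            mul_le_mul_right (lintegral_mono_set Set.diff_subset) _
    have h2 : ν (S ∩ A) ≤ ENNReal.ofReal δ :=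
      le_trans (measure_mono Set.inter_subset_right) htail
    rw [hsplit]
    exact add_le_add h1 h2
  -- convert to toReal
  show ((composed (fun i D h => gaussianReal (f i D h) ⟨σ ^ 2, sq_nonneg σ⟩) D k) S).toReal ≤
    Real.exp ε * ((composed (fun i D h => gaussianReal (f i D h) ⟨σ ^ 2, sq_nonneg σ⟩) D' k) S).toReal + δ
  rw [hcomp, hcomp']
  have hν'fin : ν' S ≠ ⊤ := (lt_of_le_of_lt hmass' ENNReal.one_lt_top).ne
  have hrhsfin : ENNReal.ofReal (Real.exp ε) * ν' S + ENNReal.ofReal δ ≠ ⊤ :=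
    ENNReal.add_ne_top.mpr ⟨ENNReal.mul_ne_top ENNReal.ofReal_ne_top hν'fin, ENNReal.ofReal_ne_top⟩
  calc (ν S).toReal ≤ (ENNReal.ofReal (Real.exp ε) * ν' S + ENNReal.ofReal δ).toReal :=
        ENNReal.toReal_mono hrhsfin hmain
    _ = Real.exp ε * (ν' S).toReal + δ := by
        rw [ENNReal.toReal_add (ENNReal.mul_ne_top ENNReal.ofReal_ne_top hν'fin)
          ENNReal.ofReal_ne_top, ENNReal.toReal_mul, ENNReal.toReal_ofReal (Real.exp_nonneg _),
          ENNReal.toReal_ofReal hδ0.le]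
end
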